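/- Let X_1,…,X_n be independent random variables each distributed according to a probability measure F on S. Let A ⊂ {1,…,n} be a fixed subset of size m with m ≤ n−2, let θ̂(A) be any measurable function of (X_i)_{i∈A} taking values in a parameter space Θ, let {M_θ : θ ∈ Θ} be a measurable family of probability measures on S, and let K be a bounded symmetric measurable kernel, possibly depending measurably on its second measure argument. Then the statistic U(A) = (1/((n−m)(n−m−1))) Σ_{i,j ∈ A^c, i≠j} K_{cen(M_{θ̂(A)})}(X_i, X_j) is an unbiased estimator of the quadratic risk at sample size m: E[U(A)] = E[d_K(F, M_{θ̂(A)})] = ρ(F, M, m). -/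

import Mathlib

open MeasureTheory ProbabilityTheory

/-- The quadratic distance d_K(F,G) = ∬ K(s,t) d(F−G)(s) d(F−G)(t), written as the
iterated integral of s ↦ ∫ K(s,t) d(F−G)(t) against the signed measure F−G. -/
noncomputable def quadDist {S : Type*} [MeasurableSpace S] (K : S → S → ℝ)
    (F G : Measure S) : ℝ :=
  (∫ s, (∫ t, K s t ∂F - ∫ t, K s t ∂G) ∂F) - ∫ s, (∫ t, K s t ∂F - ∫ t, K s t ∂G) ∂G

/-- The G-centered kernel
K_{cen(G)}(x,y) = K(x,y) − K(x,G) − K(G,y) + K(G,G). -/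
noncomputable def kcen {S : Type*} [MeasurableSpace S] (K : S → S → ℝ) (G : Measure S)
    (x y : S) : ℝ :=
  K x y - ∫ t, K x t ∂G - ∫ s, K s y ∂G + ∫ s, ∫ t, K s t ∂G ∂G

lemma integrable_of_abs_le {α : Type*} [MeasurableSpace α] (μ : Measure α) [IsFiniteMeasure μ]
    {f : α → ℝ} (hf : AEStronglyMeasurable f μ) {C : ℝ} (h : ∀ x, |f x| ≤ C) :
    Integrable f μ :=
  ⟨hf, HasFiniteIntegral.of_bounded (C := C)
    (Filter.Eventually.of_forall (by simpa [Real.norm_eq_abs] using h))⟩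

lemma abs_integral_le_of_abs_le {α : Type*} [MeasurableSpace α] (μ : Measure α)
    [IsProbabilityMeasure μ] (f : α → ℝ) {C : ℝ} (h : ∀ x, |f x| ≤ C) :
    |∫ x, f x ∂μ| ≤ C := by
  have := norm_integral_le_of_norm_le_const (μ := μ) (f := f) (C := C)
    (Filter.Eventually.of_forall (by simpa [Real.norm_eq_abs] using h))
  simpa [Real.norm_eq_abs] using this

lemma abs_comb4 {a b d e C : ℝ} (ha : |a| ≤ C) (hb : |b| ≤ C) (hd : |d| ≤ C) (he : |e| ≤ C) :
    |a - b - d + e| ≤ C + C + C + C := by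
  have h1 := abs_add_le (a - b - d) e
  have h2 := abs_sub (a - b) d
  have h3 := abs_sub a b
  linarith

lemma kcen_double_integral {S : Type*} [MeasurableSpace S]
    (F G : Measure S) [IsProbabilityMeasure F] [IsProbabilityMeasure G]
    (k : S → S → ℝ) (hk : Measurable fun p : S × S => k p.1 p.2)
    (C : ℝ) (hC : ∀ x y, |k x y| ≤ C) (hsym : ∀ x y, k x y = k y x) :
    ∫ x, ∫ y, kcen k G x y ∂F ∂F = quadDist k F G := by
  set u : S → ℝ := fun x => ∫ y, k x y ∂F with hu_def
  set v : S → ℝ := fun x => ∫ y, k x y ∂G with hv_def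
  have hu : Measurable u := (hk.stronglyMeasurable.integral_prod_right' (ν := F)).measurable
  have hv : Measurable v := (hk.stronglyMeasurable.integral_prod_right' (ν := G)).measurable
  have hkx : ∀ (x : S) (μ : Measure S) [IsProbabilityMeasure μ], Integrable (fun y => k x y) μ :=
    fun x μ _ => integrable_of_abs_le μ
      ((hk.comp measurable_prodMk_left).aestronglyMeasurable) (hC x)
  have hub : ∀ x, |u x| ≤ C := fun x => abs_integral_le_of_abs_le F _ (hC x)
  have hvb : ∀ x, |v x| ≤ C := fun x => abs_integral_le_of_abs_le G _ (hC x)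
  have hvint : ∀ (μ : Measure S) [IsProbabilityMeasure μ], Integrable v μ :=
    fun μ _ => integrable_of_abs_le μ hv.aestronglyMeasurable hvb
  have huint : ∀ (μ : Measure S) [IsProbabilityMeasure μ], Integrable u μ :=
    fun μ _ => integrable_of_abs_le μ hu.aestronglyMeasurable hub
  set c : ℝ := ∫ s, ∫ t, k s t ∂G ∂G with hc_def
  have h3 : ∀ y, (∫ s, k s y ∂G) = v y := fun y =>
    integral_congr_ae (Filter.Eventually.of_forall fun s => hsym s y)
  have inner : ∀ x, ∫ y, kcen k G x y ∂F = u x - v x - (∫ y, v y ∂F) + c := by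
    intro x
    have : ∀ y, kcen k G x y = k x y - v x - v y + c := by
      intro y; rw [kcen, h3 y]
    rw [integral_congr_ae (Filter.Eventually.of_forall this)]
    have hm1 : Measurable (fun y => k x y) := hk.comp measurable_prodMk_left
    have I1 : Integrable (fun y => k x y - v x) F :=
      integrable_of_abs_le F (hm1.sub measurable_const).aestronglyMeasurable
        (C := C + C) (fun y => (abs_sub _ _).trans (add_le_add (hC x y) (hvb x)))
    have I2 : Integrable (fun y => k x y - v x - v y) F :=
      integrable_of_abs_le F ((hm1.sub measurable_const).sub hv).aestronglyMeasurable
        (C := C + C + C) (fun y => (abs_sub _ _).trans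
          (add_le_add ((abs_sub _ _).trans (add_le_add (hC x y) (hvb x))) (hvb y)))
    rw [integral_add I2 (integrable_const _), integral_sub I1 (hvint F),
        integral_sub (hkx x F) (integrable_const _)]
    simp [u]
  rw [integral_congr_ae (Filter.Eventually.of_forall inner)]
  have h4 : (∫ x, (u x - v x - (∫ y, v y ∂F) + c) ∂F)
      = (∫ x, u x ∂F) - (∫ x, v x ∂F) - (∫ y, v y ∂F) + c := by
    have I1 : Integrable (fun x => u x - v x) F :=
      integrable_of_abs_le F (hu.sub hv).aestronglyMeasurable
        (C := C + C) (fun x => (abs_sub _ _).trans (add_le_add (hub x) (hvb x)))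
    have hIv : |∫ y, v y ∂F| ≤ C := abs_integral_le_of_abs_le F _ hvb
    have I2 : Integrable (fun x => u x - v x - (∫ y, v y ∂F)) F :=
      integrable_of_abs_le F ((hu.sub hv).sub measurable_const).aestronglyMeasurable
        (C := C + C + C) (fun x => (abs_sub _ _).trans (add_le_add
          ((abs_sub _ _).trans (add_le_add (hub x) (hvb x))) hIv))
    rw [integral_add I2 (integrable_const _), integral_sub I1 (integrable_const _),
        integral_sub (huint F) (hvint F)]
    simp
  rw [h4]
  have hfub : (∫ x, v x ∂F) = ∫ x, u x ∂G := by
    have hint : Integrable (fun p : S × S => k p.1 p.2) (F.prod G) :=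
      integrable_of_abs_le _ hk.aestronglyMeasurable (fun p => hC p.1 p.2)
    calc (∫ x, v x ∂F) = ∫ y, ∫ x, k x y ∂F ∂G := integral_integral_swap hint
      _ = ∫ y, u y ∂G := by
          refine integral_congr_ae (Filter.Eventually.of_forall fun y => ?_)
          exact integral_congr_ae (Filter.Eventually.of_forall fun x => hsym x y)
  have hvc : (∫ x, v x ∂G) = c := rfl
  have hq : quadDist k F G = (∫ x, u x ∂F) - (∫ x, v x ∂F) - ((∫ x, u x ∂G) - c) := by
    rw [quadDist]
    rw [integral_sub (huint F) (hvint F), integral_sub (huint G) (hvint G), hvc]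
  rw [hq, hfub]
  ring

/-- for X_1,…,X_n i.i.d. with law F, a fixed subset A of size m ≤ n−2,
an estimator θ̂(A) depending measurably on (X_i)_{i∈A}, a measurable family of
probability measures {M_θ}, and a kernel K possibly depending measurably on its second
measure argument, the statistic
U(A) = (1/((n−m)(n−m−1))) Σ_{i,j ∈ Aᶜ, i≠j} K_{cen(M_{θ̂(A)})}(X_i, X_j)
is unbiased for the quadratic risk at sample size m:
E[U(A)] = E[d_K(F, M_{θ̂(A)})] = ρ(F,M,m). -/
theorem subset_ustatistic_unbiased_risk {S Ω Θ : Type*}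
    [MeasurableSpace S] [MeasurableSpace Ω] [MeasurableSpace Θ]
    (P : Measure Ω) [IsProbabilityMeasure P]
    (F : Measure S) [IsProbabilityMeasure F]
    (M : Θ → Measure S) (hMprob : ∀ θ, IsProbabilityMeasure (M θ))
    (hMmeas : Measurable M)
    (K : Measure S → S → S → ℝ)
    (hKmeas : Measurable fun p : Measure S × S × S => K p.1 p.2.1 p.2.2)
    (hKbdd : ∃ Cb : ℝ, ∀ (G : Measure S) x y, |K G x y| ≤ Cb)
    (hKsymm : ∀ (G : Measure S) x y, K G x y = K G y x)
    (n m : ℕ) (hnm : m + 2 ≤ n)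
    (X : Fin n → Ω → S)
    (hXmeas : ∀ i, Measurable (X i))
    (hXindep : iIndepFun X P)
    (hXdist : ∀ i, Measure.map (X i) P = F)
    (A : Finset (Fin n)) (hA : A.card = m)
    (T : ({ i // i ∈ A } → S) → Θ)
    (hT : Measurable T) :
    ∫ ω, (1 / (((n : ℝ) - m) * ((n : ℝ) - m - 1))) *
        ∑ i, ∑ j,
          (if i ∉ A ∧ j ∉ A ∧ i ≠ j then
            kcen (K (M (T (fun i => X i.1 ω)))) (M (T (fun i => X i.1 ω)))
              (X i ω) (X j ω)
          else 0) ∂P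
      = ∫ ω, quadDist (K (M (T (fun i => X i.1 ω)))) F (M (T (fun i => X i.1 ω))) ∂P := by
  classical
  obtain ⟨Cb, hCb⟩ := hKbdd
  set C : ℝ := max Cb 0 with hC_def
  have hC : ∀ (G : Measure S) x y, |K G x y| ≤ C := fun G x y => (hCb G x y).trans (le_max_left _ _)
  -- kernel machinery and measurability
  let κ : Kernel Θ S := ⟨M, hMmeas⟩
  haveI : IsMarkovKernel κ := ⟨fun θ => hMprob θ⟩
  have e1 : Measurable fun p : Θ × S × S => K (M p.1) p.2.1 p.2.2 :=
    hKmeas.comp ((hMmeas.comp measurable_fst).prodMk measurable_snd)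
  have e1' : Measurable fun p : (Θ × S) × S => K (M p.1.1) p.1.2 p.2 :=
    hKmeas.comp ((hMmeas.comp (measurable_fst.comp measurable_fst)).prodMk
      ((measurable_snd.comp measurable_fst).prodMk measurable_snd))
  have b2 : Measurable fun p : Θ × S => ∫ t, K (M p.1) p.2 t ∂(M p.1) :=
    (e1'.stronglyMeasurable.integral_kernel_prod_right'
      (κ := κ.comap Prod.fst measurable_fst)).measurable
  have b4 : Measurable fun θ => ∫ s, ∫ t, K (M θ) s t ∂(M θ) ∂(M θ) :=
    (b2.stronglyMeasurable.integral_kernel_prod_right' (κ := κ)).measurable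
  have bF : Measurable fun p : Θ × S => ∫ t, K (M p.1) p.2 t ∂F :=
    (e1'.stronglyMeasurable.integral_prod_right' (ν := F)).measurable
  set q : Θ → ℝ := fun θ => quadDist (K (M θ)) F (M θ) with hq_def
  have hq : Measurable q := by
    simp only [hq_def, quadDist]
    have hw : Measurable fun p : Θ × S =>
        (∫ t, K (M p.1) p.2 t ∂F) - ∫ t, K (M p.1) p.2 t ∂(M p.1) := bF.sub b2
    exact ((hw.stronglyMeasurable.integral_prod_right' (ν := F)).measurable).sub
      ((hw.stronglyMeasurable.integral_kernel_prod_right' (κ := κ)).measurable)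
  -- bounds for the building blocks
  have hb2 : ∀ p : Θ × S, |∫ t, K (M p.1) p.2 t ∂(M p.1)| ≤ C := by
    intro p
    haveI := hMprob p.1
    exact abs_integral_le_of_abs_le (M p.1) _ (fun t => hC _ _ t)
  have hb4 : ∀ θ, |∫ s, ∫ t, K (M θ) s t ∂(M θ) ∂(M θ)| ≤ C := by
    intro θ
    haveI := hMprob θ
    exact abs_integral_le_of_abs_le (M θ) _ (fun s =>
      abs_integral_le_of_abs_le (M θ) _ (fun t => hC _ _ _))
  -- representation of kcen via symmetric pieces
  have hrep : ∀ (θ : Θ) x y, kcen (K (M θ)) (M θ) x y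
      = K (M θ) x y - (∫ t, K (M θ) x t ∂(M θ)) - (∫ t, K (M θ) y t ∂(M θ))
        + ∫ s, ∫ t, K (M θ) s t ∂(M θ) ∂(M θ) := by
    intro θ x y
    rw [kcen]
    congr 1
    congr 1
    exact integral_congr_ae (Filter.Eventually.of_forall fun s => hKsymm _ s y)
  -- the function on the product space
  set h : (S × S) × ({ i // i ∈ A } → S) → ℝ :=
    fun p => kcen (K (M (T p.2))) (M (T p.2)) p.1.1 p.1.2 with hh_def
  have hh_eq : ∀ p, h p = K (M (T p.2)) p.1.1 p.1.2
      - (∫ t, K (M (T p.2)) p.1.1 t ∂(M (T p.2)))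
      - (∫ t, K (M (T p.2)) p.1.2 t ∂(M (T p.2)))
      + ∫ s, ∫ t, K (M (T p.2)) s t ∂(M (T p.2)) ∂(M (T p.2)) :=
    fun p => hrep (T p.2) p.1.1 p.1.2
  have hTs : Measurable fun p : (S × S) × ({ i // i ∈ A } → S) => T p.2 :=
    hT.comp measurable_snd
  have hh : Measurable h := by
    rw [show h = fun p => K (M (T p.2)) p.1.1 p.1.2
      - (∫ t, K (M (T p.2)) p.1.1 t ∂(M (T p.2)))
      - (∫ t, K (M (T p.2)) p.1.2 t ∂(M (T p.2)))
      + ∫ s, ∫ t, K (M (T p.2)) s t ∂(M (T p.2)) ∂(M (T p.2)) from funext hh_eq]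
    refine Measurable.add (Measurable.sub (Measurable.sub ?_ ?_) ?_) ?_
    · exact e1.comp (hTs.prodMk ((measurable_fst.comp measurable_fst).prodMk
        (measurable_snd.comp measurable_fst)))
    · exact b2.comp (hTs.prodMk (measurable_fst.comp measurable_fst))
    · exact b2.comp (hTs.prodMk (measurable_snd.comp measurable_fst))
    · exact b4.comp hTs
  have hhb : ∀ p, |h p| ≤ C + C + C + C := by
    intro p
    rw [hh_eq p]
    exact abs_comb4 (hC _ _ _) (hb2 (T p.2, p.1.1)) (hb2 (T p.2, p.1.2)) (hb4 (T p.2))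
  -- Y and its law
  set Y : Ω → ({ i // i ∈ A } → S) := fun ω a => X a.1 ω with hY_def
  have hY : Measurable Y := measurable_pi_lambda _ fun a => hXmeas a.1
  haveI : IsProbabilityMeasure (P.map Y) := Measure.isProbabilityMeasure_map hY.aemeasurable
  set R : ℝ := ∫ ω, q (T (Y ω)) ∂P with hR_def
  -- key per-pair identity
  have key : ∀ i j : Fin n, i ∉ A → j ∉ A → i ≠ j →
      (∫ ω, kcen (K (M (T (Y ω)))) (M (T (Y ω))) (X i ω) (X j ω) ∂P) = R := by
    intro i j hiA hjA hij
    set W : Ω → S × S := fun ω => (X i ω, X j ω) with hW_def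
    have hW : Measurable W := (hXmeas i).prodMk (hXmeas j)
    have law1 : P.map W = F.prod F := by
      have hind := hXindep.indepFun hij
      have := (indepFun_iff_map_prod_eq_prod_map_map
        (hXmeas i).aemeasurable (hXmeas j).aemeasurable).mp hind
      rw [hW_def, this, hXdist i, hXdist j]
    have hdisj : Disjoint ({i, j} : Finset (Fin n)) A := by
      rw [Finset.disjoint_left]
      intro a ha
      simp only [Finset.mem_insert, Finset.mem_singleton] at ha
      rcases ha with rfl | rfl
      · exact hiA
      · exact hjA
    have indep2 : IndepFun W Y P := by
      have h0 := hXindep.indepFun_finset {i, j} A hdisj hXmeas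
      have hg : Measurable fun w : ({i, j} : Finset (Fin n)) → S =>
          (w ⟨i, Finset.mem_insert_self i {j}⟩,
           w ⟨j, Finset.mem_insert_of_mem (Finset.mem_singleton_self j)⟩) :=
        (measurable_pi_apply _).prodMk (measurable_pi_apply _)
      exact h0.comp hg measurable_id
    have law2 : P.map (fun ω => (W ω, Y ω)) = (F.prod F).prod (P.map Y) := by
      have := (indepFun_iff_map_prod_eq_prod_map_map
        hW.aemeasurable hY.aemeasurable).mp indep2
      rw [this, law1]
    have hφ : Measurable fun ω => (W ω, Y ω) := hW.prodMk hY
    have step1 : (∫ ω, kcen (K (M (T (Y ω)))) (M (T (Y ω))) (X i ω) (X j ω) ∂P)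
        = ∫ p, h p ∂((F.prod F).prod (P.map Y)) := by
      rw [← law2, integral_map hφ.aemeasurable hh.aestronglyMeasurable]
    have Ih : Integrable h ((F.prod F).prod (P.map Y)) :=
      integrable_of_abs_le _ hh.aestronglyMeasurable hhb
    have step2 : (∫ p, h p ∂((F.prod F).prod (P.map Y)))
        = ∫ v, ∫ p, h (p, v) ∂(F.prod F) ∂(P.map Y) := integral_prod_symm h Ih
    have step3 : ∀ v, (∫ p, h (p, v) ∂(F.prod F)) = q (T v) := by
      intro v
      haveI := hMprob (T v)
      have hfm : Measurable fun p : S × S => h (p, v) :=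
        hh.comp (measurable_id.prodMk measurable_const)
      have hfv : Integrable (fun p : S × S => h (p, v)) (F.prod F) :=
        integrable_of_abs_le _ hfm.aestronglyMeasurable (fun p => hhb (p, v))
      rw [integral_prod _ hfv]
      exact kcen_double_integral F (M (T v)) (K (M (T v)))
        (hKmeas.comp (measurable_const.prodMk measurable_id)) C
        (fun x y => hC _ x y) (hKsymm _)
    have step4 : (∫ v, q (T v) ∂(P.map Y)) = R := by
      rw [hR_def]
      exact integral_map (f := fun v => q (T v)) hY.aemeasurable
        ((hq.comp hT).aestronglyMeasurable)
    rw [step1, step2]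
    rw [integral_congr_ae (Filter.Eventually.of_forall step3), step4]
  -- now the assembly
  show (∫ ω, (1 / (((n : ℝ) - m) * ((n : ℝ) - m - 1))) *
        ∑ i, ∑ j,
          (if i ∉ A ∧ j ∉ A ∧ i ≠ j then
            kcen (K (M (T (Y ω)))) (M (T (Y ω))) (X i ω) (X j ω)
          else 0) ∂P) = ∫ ω, q (T (Y ω)) ∂P
  have hfint : ∀ i j : Fin n, Integrable (fun ω =>
      (if i ∉ A ∧ j ∉ A ∧ i ≠ j then
        kcen (K (M (T (Y ω)))) (M (T (Y ω))) (X i ω) (X j ω) else 0)) P := by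
    intro i j
    by_cases hc : i ∉ A ∧ j ∉ A ∧ i ≠ j
    · simp only [if_pos hc]
      have hm : Measurable fun ω => kcen (K (M (T (Y ω)))) (M (T (Y ω))) (X i ω) (X j ω) :=
        hh.comp (((hXmeas i).prodMk (hXmeas j)).prodMk hY)
      exact integrable_of_abs_le _ hm.aestronglyMeasurable
        (C := C + C + C + C) (fun ω => hhb ((X i ω, X j ω), Y ω))
    · simp only [if_neg hc]
      exact integrable_const 0
  rw [integral_const_mul]
  rw [integral_finset_sum _ (fun i _ => integrable_finset_sum _ (fun j _ => hfint i j))]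
  have e2 : ∀ i j : Fin n, (∫ ω,
      (if i ∉ A ∧ j ∉ A ∧ i ≠ j then
        kcen (K (M (T (Y ω)))) (M (T (Y ω))) (X i ω) (X j ω) else 0) ∂P)
      = if i ∉ A ∧ j ∉ A ∧ i ≠ j then R else 0 := by
    intro i j
    by_cases hc : i ∉ A ∧ j ∉ A ∧ i ≠ j
    · simp only [if_pos hc]
      exact key i j hc.1 hc.2.1 hc.2.2
    · simp only [if_neg hc]
      exact integral_zero _ _
  have e3 : ∀ i : Fin n, (∫ ω, ∑ j,
      (if i ∉ A ∧ j ∉ A ∧ i ≠ j then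
        kcen (K (M (T (Y ω)))) (M (T (Y ω))) (X i ω) (X j ω) else 0) ∂P)
      = ∑ j, if i ∉ A ∧ j ∉ A ∧ i ≠ j then R else 0 := by
    intro i
    rw [integral_finset_sum _ (fun j _ => hfint i j)]
    exact Finset.sum_congr rfl fun j _ => e2 i j
  rw [Finset.sum_congr rfl fun i _ => e3 i]
  -- counting
  have cardAc : Aᶜ.card = n - m := by
    rw [Finset.card_compl, hA, Fintype.card_fin]
  have count : (∑ i : Fin n, ∑ j : Fin n, if i ∉ A ∧ j ∉ A ∧ i ≠ j then R else 0)
      = ((n - m : ℕ) : ℝ) * (((n - m - 1 : ℕ) : ℝ) * R) := by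
    have inner : ∀ i : Fin n,
        (∑ j : Fin n, if i ∉ A ∧ j ∉ A ∧ i ≠ j then R else 0)
        = if i ∉ A then ((n - m - 1 : ℕ) : ℝ) * R else 0 := by
      intro i
      by_cases hi : i ∉ A
      · rw [if_pos hi]
        have : ∀ j : Fin n, (if i ∉ A ∧ j ∉ A ∧ i ≠ j then R else 0)
            = if j ∈ Aᶜ.erase i then R else 0 := by
          intro j
          congr 1
          simp only [Finset.mem_erase, Finset.mem_compl, eq_iff_iff]
          constructor
          · rintro ⟨_, hj, hij⟩; exact ⟨hij.symm, hj⟩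
          · rintro ⟨hji, hj⟩; exact ⟨hi, hj, fun hx => hji hx.symm⟩
        rw [Finset.sum_congr rfl fun j _ => this j]
        rw [Finset.sum_ite_mem, Finset.univ_inter, Finset.sum_const]
        rw [Finset.card_erase_of_mem (Finset.mem_compl.mpr hi), cardAc]
        simp [nsmul_eq_mul]
      · rw [if_neg hi]
        refine Finset.sum_eq_zero fun j _ => ?_
        rw [if_neg (fun hx => hi hx.1)]
    rw [Finset.sum_congr rfl fun i _ => inner i]
    have : ∀ i : Fin n, (if i ∉ A then ((n - m - 1 : ℕ) : ℝ) * R else 0)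
        = if i ∈ Aᶜ then ((n - m - 1 : ℕ) : ℝ) * R else 0 := by
      intro i; congr 1; simp [Finset.mem_compl]
    rw [Finset.sum_congr rfl fun i _ => this i]
    rw [Finset.sum_ite_mem, Finset.univ_inter, Finset.sum_const, cardAc, nsmul_eq_mul]
  rw [count]
  -- final scalar arithmetic
  have hmn : (m : ℝ) + 2 ≤ (n : ℝ) := by exact_mod_cast hnm
  have hm_le : m ≤ n := by omega
  have hcast1 : ((n - m : ℕ) : ℝ) = (n : ℝ) - m := by
    rw [Nat.cast_sub hm_le]
  have hcast2 : ((n - m - 1 : ℕ) : ℝ) = (n : ℝ) - m - 1 := by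
    rw [Nat.cast_sub (by omega), Nat.cast_sub hm_le]; simp
  rw [hcast1, hcast2]
  have h1 : (n : ℝ) - m ≠ 0 := by linarith
  have h2 : (n : ℝ) - m - 1 ≠ 0 := by linarith
  field_simp
  ring
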